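/- Let μ ∈ 𝒫_ac(𝒳) and ν ∈ 𝒫(𝒴) be probability measures on compact sets, with μ absolutely continuous, c bounded measurable, ε > 0. Let φ⋆ be an optimal semi-dual EOT potential with associated optimal plan π⋆^ε, and for a continuous f : 𝒳 → ℝ define the induced plan dπ_f^ε(x,y) = [exp((f(x)-c(x,y))/ε) / ∫_𝒳 exp((f(x')-c(x',y))/ε) dμ(x')] dμ⊗ν(x,y). Then the semi-dual suboptimality gap equals ε times the KL divergence between plans: Γ(φ⋆) - Γ(f) = ε · D_KL(π⋆^ε ‖ π_f^ε), where Γ(g) = ∫ g dμ + ∫ g^{c,ε} dν. -/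

import Mathlib

open MeasureTheory
open scoped ENNReal NNReal

/-- Kullback–Leibler divergence `∫ log(dπ/dρ) dπ` (real-valued, via the Radon–Nikodym
derivative). -/
noncomputable def klDiv' {α : Type*} [MeasurableSpace α] (π ρ : Measure α) : ℝ :=
  ∫ x, Real.log ((π.rnDeriv ρ x).toReal) ∂π

abbrev Esp (d : ℕ) := EuclideanSpace ℝ (Fin d)

section Aux

variable {α β : Type*} [MeasurableSpace α] [MeasurableSpace β]

lemma EOT.integrable_of_bdd (μ : Measure α) [IsFiniteMeasure μ] {u : α → ℝ}
    (hm : Measurable u) {C : ℝ} (hb : ∀ x, |u x| ≤ C) : Integrable u μ :=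
  ⟨hm.aestronglyMeasurable, HasFiniteIntegral.of_bounded (C := C)
    (Filter.Eventually.of_forall fun x => by simpa [Real.norm_eq_abs] using hb x)⟩

lemma EOT.marg_fst (μ : Measure α) (ν : Measure β)
    [IsProbabilityMeasure μ] [IsProbabilityMeasure ν]
    {g : α × β → ℝ} (hg : Measurable g) {Cg : ℝ} (hgb : ∀ p, |g p| ≤ Cg)
    (hS : ∀ᵐ x ∂μ, ∫ y, g (x, y) ∂ν = 1)
    {u : α → ℝ} (hu : Measurable u) {Cu : ℝ} (hub : ∀ x, |u x| ≤ Cu) :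
    ∫ p, g p * u p.1 ∂(μ.prod ν) = ∫ x, u x ∂μ := by
  have hint : Integrable (fun p => g p * u p.1) (μ.prod ν) :=
    EOT.integrable_of_bdd _ (hg.mul (hu.comp measurable_fst)) (C := Cg * Cu)
      (fun p => by
        rw [abs_mul]
        exact mul_le_mul (hgb p) (hub p.1) (abs_nonneg _) ((abs_nonneg _).trans (hgb p)))
  rw [MeasureTheory.integral_prod _ hint]
  refine integral_congr_ae ?_
  filter_upwards [hS] with x hx
  rw [MeasureTheory.integral_mul_const, hx, one_mul]

lemma EOT.marg_snd (μ : Measure α) (ν : Measure β)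
    [IsProbabilityMeasure μ] [IsProbabilityMeasure ν]
    {g : α × β → ℝ} (hg : Measurable g) {Cg : ℝ} (hgb : ∀ p, |g p| ≤ Cg)
    (hS : ∀ᵐ y ∂ν, ∫ x, g (x, y) ∂μ = 1)
    {v : β → ℝ} (hv : Measurable v) {Cv : ℝ} (hvb : ∀ y, |v y| ≤ Cv) :
    ∫ p, g p * v p.2 ∂(μ.prod ν) = ∫ y, v y ∂ν := by
  have hint : Integrable (fun p => g p * v p.2) (μ.prod ν) :=
    EOT.integrable_of_bdd _ (hg.mul (hv.comp measurable_snd)) (C := Cg * Cv)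
      (fun p => by
        rw [abs_mul]
        exact mul_le_mul (hgb p) (hvb p.2) (abs_nonneg _) ((abs_nonneg _).trans (hgb p)))
  rw [MeasureTheory.integral_prod_symm _ hint]
  refine integral_congr_ae ?_
  filter_upwards [hS] with y hy
  rw [MeasureTheory.integral_mul_const, hy, one_mul]

/-- Properties of the normalisation `Z u y = ∫ exp((u x - c x y)/ε) dμ`. -/
lemma EOT.Z_props (μ : Measure α) [IsProbabilityMeasure μ] {ε : ℝ} (hε : 0 < ε)
    {M Mc : ℝ} {u : α → ℝ} (hu : Measurable u) (hub : ∀ x, |u x| ≤ M)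
    {c : α → β → ℝ} (hcm : Measurable fun p : α × β => c p.1 p.2) (hcb : ∀ x y, |c x y| ≤ Mc) :
    Measurable (fun y => ∫ x, Real.exp ((u x - c x y) / ε) ∂μ) ∧
      ∀ y, Real.exp (-((M + Mc) / ε)) ≤ ∫ x, Real.exp ((u x - c x y) / ε) ∂μ ∧
        (∫ x, Real.exp ((u x - c x y) / ε) ∂μ) ≤ Real.exp ((M + Mc) / ε) := by
  have hm : Measurable fun p : α × β => Real.exp ((u p.1 - c p.1 p.2) / ε) :=
    (((hu.comp measurable_fst).sub hcm).div_const ε).exp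
  have hbd : ∀ (x : α) (y : β), Real.exp ((u x - c x y) / ε) ∈
      Set.Icc (Real.exp (-((M + Mc) / ε))) (Real.exp ((M + Mc) / ε)) := by
    intro x y
    have h1 : |u x - c x y| ≤ M + Mc := (abs_sub _ _).trans (add_le_add (hub x) (hcb x y))
    have h2 : |(u x - c x y) / ε| ≤ (M + Mc) / ε := by
      rw [abs_div, abs_of_pos hε]
      gcongr
    rw [abs_le] at h2
    exact ⟨Real.exp_le_exp.mpr h2.1, Real.exp_le_exp.mpr h2.2⟩
  have hintx : ∀ y : β, Integrable (fun x => Real.exp ((u x - c x y) / ε)) μ := by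
    intro y
    have hcy : Measurable fun x => c x y := hcm.comp (measurable_id.prodMk measurable_const)
    refine EOT.integrable_of_bdd μ (((hu.sub hcy).div_const ε).exp)
      (C := Real.exp ((M + Mc) / ε)) (fun x => ?_)
    rw [abs_of_pos (Real.exp_pos _)]
    exact (hbd x y).2
  refine ⟨(hm.stronglyMeasurable.integral_prod_left').measurable, fun y => ⟨?_, ?_⟩⟩
  · calc Real.exp (-((M + Mc) / ε)) = ∫ _x, Real.exp (-((M + Mc) / ε)) ∂μ := by simp
    _ ≤ ∫ x, Real.exp ((u x - c x y) / ε) ∂μ :=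
        integral_mono (integrable_const _) (hintx y) (fun x => (hbd x y).1)
  · calc (∫ x, Real.exp ((u x - c x y) / ε) ∂μ) ≤ ∫ _x, Real.exp ((M + Mc) / ε) ∂μ :=
        integral_mono (hintx y) (integrable_const _) (fun x => (hbd x y).2)
    _ = Real.exp ((M + Mc) / ε) := by simp

end Aux

/-- Semi-dual suboptimality gap equals `ε` times the KL divergence between the optimal
EOT plan and the plan induced by `f`: `Γ(φ⋆) - Γ(f) = ε D_KL(π⋆^ε ‖ π_f^ε)`. -/
theorem stmt_5 {d : ℕ} (X Y : Set (EuclideanSpace ℝ (Fin d)))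
    (hX : IsCompact X) (hY : IsCompact Y)
    (μ ν : Measure (EuclideanSpace ℝ (Fin d)))
    [IsProbabilityMeasure μ] [IsProbabilityMeasure ν]
    (hμX : μ X = 1) (hνY : ν Y = 1) (hac : μ ≪ volume)
    (c : EuclideanSpace ℝ (Fin d) → EuclideanSpace ℝ (Fin d) → ℝ)
    (hcm : Measurable fun p : EuclideanSpace ℝ (Fin d) × EuclideanSpace ℝ (Fin d) => c p.1 p.2)
    (Mc : ℝ) (hcb : ∀ x y, |c x y| ≤ Mc)
    (ε : ℝ) (hε : 0 < ε)
    -- `φ⋆` is an optimal semi-dual potential: together with `ψ⋆ = φ⋆^{c,ε}` it solves the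
    -- Schrödinger system, so the associated optimal plan is `π⋆`.
    (φs ψs : EuclideanSpace ℝ (Fin d) → ℝ)
    (hφsm : Measurable φs) (Mφ : ℝ) (hφsb : ∀ x, |φs x| ≤ Mφ)
    (hψsdef : ∀ y, ψs y = -ε * Real.log (∫ x, Real.exp ((φs x - c x y) / ε) ∂μ))
    (hS1 : ∀ᵐ y ∂ν, ∫ x, Real.exp ((φs x + ψs y - c x y) / ε) ∂μ = 1)
    (hS2 : ∀ᵐ x ∂μ, ∫ y, Real.exp ((φs x + ψs y - c x y) / ε) ∂ν = 1)
    (f : EuclideanSpace ℝ (Fin d) → ℝ) (hf : Continuous f)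
    (Mf : ℝ) (hfb : ∀ x, |f x| ≤ Mf) :
    (∫ x, φs x ∂μ
        + ∫ y, (-ε * Real.log (∫ x, Real.exp ((φs x - c x y) / ε) ∂μ)) ∂ν)
      - (∫ x, f x ∂μ
        + ∫ y, (-ε * Real.log (∫ x, Real.exp ((f x - c x y) / ε) ∂μ)) ∂ν)
    = ε * klDiv'
        ((μ.prod ν).withDensity fun p =>
          ENNReal.ofReal (Real.exp ((φs p.1 + ψs p.2 - c p.1 p.2) / ε)))
        ((μ.prod ν).withDensity fun p =>
          ENNReal.ofReal (Real.exp ((f p.1 - c p.1 p.2) / ε)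
            / ∫ x, Real.exp ((f x - c x p.2) / ε) ∂μ)) := by
  classical
  -- basic constants
  have hMc : 0 ≤ Mc := (abs_nonneg _).trans (hcb 0 0)
  have hMf : 0 ≤ Mf := (abs_nonneg _).trans (hfb 0)
  have hMφ : 0 ≤ Mφ := (abs_nonneg _).trans (hφsb 0)
  have hfm : Measurable f := hf.measurable
  -- the normalisations
  set Zf : Esp d → ℝ := fun y => ∫ x, Real.exp ((f x - c x y) / ε) ∂μ with hZf
  set Zφ : Esp d → ℝ := fun y => ∫ x, Real.exp ((φs x - c x y) / ε) ∂μ with hZφ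
  obtain ⟨hZfm, hZfb⟩ := EOT.Z_props μ hε hfm hfb hcm hcb
  obtain ⟨hZφm, hZφb⟩ := EOT.Z_props μ hε hφsm hφsb hcm hcb
  have hZfpos : ∀ y, 0 < Zf y := fun y => (Real.exp_pos _).trans_le (hZfb y).1
  have hZφpos : ∀ y, 0 < Zφ y := fun y => (Real.exp_pos _).trans_le (hZφb y).1
  have hlogZf : ∀ y, |Real.log (Zf y)| ≤ (Mf + Mc) / ε := by
    intro y
    rw [abs_le]
    constructor
    · have := Real.log_le_log (Real.exp_pos _) (hZfb y).1
      rwa [Real.log_exp] at this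
    · have := Real.log_le_log (hZfpos y) (hZfb y).2
      rwa [Real.log_exp] at this
  have hlogZφ : ∀ y, |Real.log (Zφ y)| ≤ (Mφ + Mc) / ε := by
    intro y
    rw [abs_le]
    constructor
    · have := Real.log_le_log (Real.exp_pos _) (hZφb y).1
      rwa [Real.log_exp] at this
    · have := Real.log_le_log (hZφpos y) (hZφb y).2
      rwa [Real.log_exp] at this
  -- ψs properties
  have hψs_eq : ψs = fun y => -ε * Real.log (Zφ y) := funext fun y => hψsdef y
  have hψsm : Measurable ψs := by
    rw [hψs_eq]; exact (hZφm.log).const_mul (-ε)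
  have hψsb : ∀ y, |ψs y| ≤ Mφ + Mc := by
    intro y
    rw [hψs_eq]
    have := hlogZφ y
    calc |(-ε) * Real.log (Zφ y)| = ε * |Real.log (Zφ y)| := by
          rw [abs_mul, abs_neg, abs_of_pos hε]
    _ ≤ ε * ((Mφ + Mc) / ε) := by
          exact mul_le_mul_of_nonneg_left (hlogZφ y) hε.le
    _ = Mφ + Mc := by field_simp
  -- densities
  set g : Esp d × Esp d → ℝ := fun p => Real.exp ((φs p.1 + ψs p.2 - c p.1 p.2) / ε) with hgdef
  set h : Esp d × Esp d → ℝ := fun p => Real.exp ((f p.1 - c p.1 p.2) / ε) / Zf p.2 with hhdef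
  have hgm : Measurable g :=
    ((((hφsm.comp measurable_fst).add (hψsm.comp measurable_snd)).sub hcm).div_const ε).exp
  have hhm : Measurable h :=
    (((hfm.comp measurable_fst).sub hcm).div_const ε).exp.div (hZfm.comp measurable_snd)
  have hgpos : ∀ p, 0 < g p := fun p => Real.exp_pos _
  have hhpos : ∀ p, 0 < h p := fun p => div_pos (Real.exp_pos _) (hZfpos p.2)
  set Cg : ℝ := Real.exp ((Mφ + (Mφ + Mc) + Mc) / ε) with hCg
  have hgb : ∀ p, |g p| ≤ Cg := by
    intro p
    rw [abs_of_pos (hgpos p), hCg, Real.exp_le_exp]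
    have h1 : φs p.1 + ψs p.2 - c p.1 p.2 ≤ Mφ + (Mφ + Mc) + Mc := by
      have := abs_le.mp (hφsb p.1)
      have := abs_le.mp (hψsb p.2)
      have := abs_le.mp (hcb p.1 p.2)
      linarith
    gcongr
  set Ch : ℝ := Real.exp ((Mf + Mc) / ε) * Real.exp ((Mf + Mc) / ε) with hCh
  have hhb : ∀ p, |h p| ≤ Ch := by
    intro p
    rw [abs_of_pos (hhpos p), hCh, hhdef]
    have h1 : Real.exp ((f p.1 - c p.1 p.2) / ε) ≤ Real.exp ((Mf + Mc) / ε) := by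
      rw [Real.exp_le_exp]
      have := abs_le.mp (hfb p.1)
      have := abs_le.mp (hcb p.1 p.2)
      have hle : f p.1 - c p.1 p.2 ≤ Mf + Mc := by linarith
      gcongr
    have h2 : Real.exp (-((Mf + Mc) / ε)) ≤ Zf p.2 := (hZfb p.2).1
    calc Real.exp ((f p.1 - c p.1 p.2) / ε) / Zf p.2
        ≤ Real.exp ((Mf + Mc) / ε) / Real.exp (-((Mf + Mc) / ε)) :=
          div_le_div₀ (Real.exp_pos _).le h1 (Real.exp_pos _) h2
    _ = Real.exp ((Mf + Mc) / ε) * Real.exp ((Mf + Mc) / ε) := by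
          rw [Real.exp_neg, div_inv_eq_mul]
  -- ENNReal densities
  set G : Esp d × Esp d → ℝ≥0∞ := fun p => ENNReal.ofReal (g p) with hGdef
  set H : Esp d × Esp d → ℝ≥0∞ := fun p => ENNReal.ofReal (h p) with hHdef
  have hGm : Measurable G := hgm.ennreal_ofReal
  have hHm : Measurable H := hhm.ennreal_ofReal
  have hHne0 : ∀ p, H p ≠ 0 := fun p => by
    simp [hHdef, ENNReal.ofReal_eq_zero, not_le, hhpos p]
  have hHnetop : ∀ p, H p ≠ ∞ := fun p => ENNReal.ofReal_ne_top
  set πs : Measure (Esp d × Esp d) := (μ.prod ν).withDensity G with hπs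
  set πf : Measure (Esp d × Esp d) := (μ.prod ν).withDensity H with hπf
  -- πf is a finite measure
  have hHlint : ∫⁻ p, H p ∂(μ.prod ν) ≠ ∞ := by
    have hle : ∫⁻ p, H p ∂(μ.prod ν) ≤ ∫⁻ _p, ENNReal.ofReal Ch ∂(μ.prod ν) :=
      lintegral_mono fun p => by
        rw [hHdef]
        exact ENNReal.ofReal_le_ofReal ((abs_of_pos (hhpos p)).symm.trans_le (hhb p))
    refine ne_of_lt (hle.trans_lt ?_)
    rw [lintegral_const]
    exact ENNReal.mul_lt_top ENNReal.ofReal_lt_top (measure_lt_top _ _)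
  haveI : IsFiniteMeasure πf := isFiniteMeasure_withDensity hHlint
  -- πs = πf.withDensity (G / H)
  have hπs_eq : πs = πf.withDensity (fun p => G p / H p) := by
    have hfun : (H * fun p => G p / H p) = G :=
      funext fun p => ENNReal.mul_div_cancel (hHne0 p) (hHnetop p)
    rw [hπf, ← withDensity_mul _ hHm (g := fun p => G p / H p) (hGm.div hHm), hfun]
  have hRN : πs.rnDeriv πf =ᵐ[πf] fun p => G p / H p := by
    rw [hπs_eq]
    exact Measure.rnDeriv_withDensity πf (hGm.div hHm)
  have hacπ : πs ≪ πf := by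
    refine Measure.AbsolutelyContinuous.trans (withDensity_absolutelyContinuous _ _) ?_
    exact withDensity_absolutelyContinuous' hHm.aemeasurable
      (Filter.Eventually.of_forall hHne0)
  have hRN' : πs.rnDeriv πf =ᵐ[πs] fun p => G p / H p := hacπ.ae_le hRN
  -- compute the KL divergence
  have hGH_toReal : ∀ p, ((G p / H p).toReal) = g p / h p := by
    intro p
    rw [hGdef, hHdef, ENNReal.toReal_div, ENNReal.toReal_ofReal (hgpos p).le,
      ENNReal.toReal_ofReal (hhpos p).le]
  have hkl1 : klDiv' πs πf = ∫ p, Real.log (g p / h p) ∂πs := by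
    refine integral_congr_ae ?_
    filter_upwards [hRN'] with p hp
    rw [hp, hGH_toReal]
  -- the log-ratio
  have hlograt : ∀ p : Esp d × Esp d, Real.log (g p / h p)
      = ((φs p.1 - f p.1) + (ψs p.2 + ε * Real.log (Zf p.2))) / ε := by
    intro p
    rw [Real.log_div (hgpos p).ne' (hhpos p).ne', hgdef, hhdef,
      Real.log_div (Real.exp_pos _).ne' (hZfpos p.2).ne', Real.log_exp, Real.log_exp]
    field_simp
    ring
  -- pass from πs-integral to (μ × ν)-integral
  have hπs_nn : πs = (μ.prod ν).withDensity fun p => ((g p).toNNReal : ℝ≥0∞) := rfl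
  have hgnnm : Measurable fun p => (g p).toNNReal := hgm.real_toNNReal
  have hkl2 : ∫ p, Real.log (g p / h p) ∂πs
      = ∫ p, g p * (((φs p.1 - f p.1) + (ψs p.2 + ε * Real.log (Zf p.2))) / ε) ∂(μ.prod ν) := by
    rw [hπs_nn]
    rw [integral_withDensity_eq_integral_smul hgnnm]
    refine integral_congr_ae (Filter.Eventually.of_forall fun p => ?_)
    dsimp only
    rw [hlograt p, NNReal.smul_def, smul_eq_mul, Real.coe_toNNReal _ (hgpos p).le]
  -- split the integral via the marginals
  set u : Esp d → ℝ := fun x => φs x - f x with hu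
  set v : Esp d → ℝ := fun y => ψs y + ε * Real.log (Zf y) with hv
  have hum : Measurable u := hφsm.sub hfm
  have hvm : Measurable v := hψsm.add ((hZfm.log).const_mul ε)
  have hub : ∀ x, |u x| ≤ Mφ + Mf := fun x =>
    (abs_sub _ _).trans (add_le_add (hφsb x) (hfb x))
  have hvb : ∀ y, |v y| ≤ (Mφ + Mc) + (Mf + Mc) := by
    intro y
    refine (abs_add_le _ _).trans (add_le_add (hψsb y) ?_)
    rw [abs_mul, abs_of_pos hε]
    calc ε * |Real.log (Zf y)| ≤ ε * ((Mf + Mc) / ε) :=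
          mul_le_mul_of_nonneg_left (hlogZf y) hε.le
    _ = Mf + Mc := by field_simp
  have hgu_int : Integrable (fun p : Esp d × Esp d => g p * u p.1) (μ.prod ν) :=
    EOT.integrable_of_bdd _ (hgm.mul (hum.comp measurable_fst)) (C := Cg * (Mφ + Mf))
      (fun p => by
        rw [abs_mul]
        exact mul_le_mul (hgb p) (hub p.1) (abs_nonneg _) ((abs_nonneg _).trans (hgb p)))
  have hgv_int : Integrable (fun p : Esp d × Esp d => g p * v p.2) (μ.prod ν) :=
    EOT.integrable_of_bdd _ (hgm.mul (hvm.comp measurable_snd))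
      (C := Cg * ((Mφ + Mc) + (Mf + Mc)))
      (fun p => by
        rw [abs_mul]
        exact mul_le_mul (hgb p) (hvb p.2) (abs_nonneg _) ((abs_nonneg _).trans (hgb p)))
  have hS2' : ∀ᵐ x ∂μ, ∫ y, g (x, y) ∂ν = 1 := hS2
  have hS1' : ∀ᵐ y ∂ν, ∫ x, g (x, y) ∂μ = 1 := hS1
  have hsplit : ∫ p, g p * (u p.1 + v p.2) ∂(μ.prod ν)
      = (∫ x, u x ∂μ) + ∫ y, v y ∂ν := by
    have : (fun p : Esp d × Esp d => g p * (u p.1 + v p.2))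
        = fun p => g p * u p.1 + g p * v p.2 := by
      funext p; ring
    rw [this, integral_add hgu_int hgv_int,
      EOT.marg_fst μ ν hgm hgb hS2' hum hub,
      EOT.marg_snd μ ν hgm hgb hS1' hvm hvb]
  -- conclude the RHS computation
  have hRHS : ε * klDiv' πs πf = (∫ x, u x ∂μ) + ∫ y, v y ∂ν := by
    rw [hkl1, hkl2, ← hsplit, ← integral_const_mul]
    refine integral_congr_ae (Filter.Eventually.of_forall fun p => ?_)
    field_simp
    rfl
  -- now rearrange the LHS
  have hφs_int : Integrable φs μ := EOT.integrable_of_bdd μ hφsm hφsb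
  have hf_int : Integrable f μ := EOT.integrable_of_bdd μ hfm hfb
  have hψs_int : Integrable ψs ν := EOT.integrable_of_bdd ν hψsm hψsb
  have hlogZf_int : Integrable (fun y => Real.log (Zf y)) ν :=
    EOT.integrable_of_bdd ν hZfm.log hlogZf
  have h1 : ∫ y, (-ε * Real.log (∫ x, Real.exp ((φs x - c x y) / ε) ∂μ)) ∂ν
      = ∫ y, ψs y ∂ν := integral_congr_ae (Filter.Eventually.of_forall fun y => (hψsdef y).symm)
  have h2 : ∫ y, (-ε * Real.log (∫ x, Real.exp ((f x - c x y) / ε) ∂μ)) ∂ν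
      = -ε * ∫ y, Real.log (Zf y) ∂ν := by
    rw [← integral_const_mul]
  have h3 : ∫ x, u x ∂μ = (∫ x, φs x ∂μ) - ∫ x, f x ∂μ := integral_sub hφs_int hf_int
  have h4 : ∫ y, v y ∂ν = (∫ y, ψs y ∂ν) + ε * ∫ y, Real.log (Zf y) ∂ν := by
    rw [hv]
    rw [integral_add hψs_int (hlogZf_int.const_mul ε), integral_const_mul]
  rw [hRHS, h1, h2, h3, h4]
  ring
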